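/- Let h: L → M and g: N → M be morphisms of differential graded Lie algebras over ℂ. Then the Maurer–Cartan functor MC_{(h,g)} is homogeneous: for every pair of morphisms B → A and C → A of local Artinian ℂ-algebras with residue field ℂ such that the fiber product B ×_A C is again local Artinian, the natural map MC_{(h,g)}(B ×_A C) → MC_{(h,g)}(B) ×_{MC_{(h,g)}(A)} MC_{(h,g)}(C) is bijective. -/

import Mathlib

noncomputable section

open TensorProduct

/-- Raw graded Lie data: a `ℤ`-graded complex vector space with a degree-one
differential and a degree-zero bracket (no axioms). -/
structure GLD where
  V : ℤ → Type
  [grp : ∀ i, AddCommGroup (V i)]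
  [mod : ∀ i, Module ℂ (V i)]
  d : ∀ i, V i → V (i + 1)
  br : ∀ i j, V i → V j → V (i + j)

attribute [instance] GLD.grp GLD.mod

namespace GLD

/-- Transport along an equality of degrees. -/
def tr (L : GLD) {i j : ℤ} (h : i = j) (x : L.V i) : L.V j := h ▸ x

/-- The Maurer-Cartan equation in degree one: `dx + ½[x,x] = 0`. -/
def MC1 (L : GLD) (x : L.V 1) : Prop :=
  L.d 1 x + (2 : ℂ)⁻¹ • L.br 1 1 x x = 0

/-- The adjoint action of a degree-zero element on degree one. -/
def ad01 (L : GLD) (a : L.V 0) (x : L.V 1) : L.V 1 := L.tr (by omega) (L.br 0 1 a x)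

/-- The adjoint action of a degree-zero element on degree zero. -/
def ad00 (L : GLD) (a : L.V 0) (x : L.V 0) : L.V 0 := L.tr (by omega) (L.br 0 0 a x)

/-- The gauge action `e^a * x = x + Σ_{n≥0} ad_a^n/(n+1)! ([a,x] - da)`. -/
def gauge (L : GLD) (a : L.V 0) (x : L.V 1) : L.V 1 :=
  x + ∑ᶠ n : ℕ, (((n+1).factorial : ℂ))⁻¹ •
    (L.ad01 a)^[n] (L.ad01 a x - L.tr (by omega) (L.d 0 a))

/-- Right-nested bracket of a word in two degree-zero letters `x` (true) and `y` (false). -/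
def nest (L : GLD) (x y : L.V 0) : List Bool → L.V 0
  | [] => 0
  | [b] => if b then x else y
  | b :: (c :: rest) => L.ad00 (if b then x else y) (L.nest x y (c :: rest))

end GLD

/-- The word `x^{r₁} y^{s₁} ⋯ x^{r_n} y^{s_n}` encoded as a list of booleans. -/
def bchWord (P : List (ℕ × ℕ)) : List Bool :=
  P.flatMap fun p => List.replicate p.1 true ++ List.replicate p.2 false

open Classical in
/-- The coefficient in Dynkin's formula for the Baker-Campbell-Hausdorff series. -/
def bchCoeff (P : List (ℕ × ℕ)) : ℂ :=
  if P = [] ∨ ¬ (∀ p ∈ P, 0 < p.1 + p.2) then 0 else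
    (-1 : ℂ) ^ (P.length - 1) / (P.length : ℂ) *
      ((((P.map fun p => p.1 + p.2).sum : ℕ) : ℂ) *
        (((P.map fun p => (p.1.factorial * p.2.factorial : ℕ)).prod : ℕ) : ℂ))⁻¹

/-- The Baker-Campbell-Hausdorff product on degree-zero elements, via Dynkin's formula. -/
def GLD.bch (L : GLD) (x y : L.V 0) : L.V 0 :=
  ∑ᶠ P : List (ℕ × ℕ), bchCoeff P • L.nest x y (bchWord P)

/-- Differential graded Lie algebra over `ℂ`. -/
structure DGLA extends GLD where
  d_add : ∀ i (x y : V i), d i (x + y) = d i x + d i y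
  d_smul : ∀ i (c : ℂ) (x : V i), d i (c • x) = c • d i x
  br_add_left : ∀ i j (x x' : V i) (y : V j), br i j (x + x') y = br i j x y + br i j x' y
  br_smul_left : ∀ i j (c : ℂ) (x : V i) (y : V j), br i j (c • x) y = c • br i j x y
  br_add_right : ∀ i j (x : V i) (y y' : V j), br i j x (y + y') = br i j x y + br i j x y'
  br_smul_right : ∀ i j (c : ℂ) (x : V i) (y : V j), br i j x (c • y) = c • br i j x y
  d_sq : ∀ i (x : V i), d (i + 1) (d i x) = 0
  antisym : ∀ i j (x : V i) (y : V j),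
    br i j x y = - toGLD.tr (by omega) (((Int.negOnePow (i * j) : ℤˣ) : ℤ) • br j i y x)
  leibniz : ∀ i j (x : V i) (y : V j),
    d (i + j) (br i j x y) =
      toGLD.tr (by omega) (br (i + 1) j (d i x) y) +
        ((Int.negOnePow i : ℤˣ) : ℤ) • toGLD.tr (by omega) (br i (j + 1) x (d j y))
  jacobi : ∀ i j k (x : V i) (y : V j) (z : V k),
    br i (j + k) x (br j k y z) =
      toGLD.tr (by omega) (br (i + j) k (br i j x y) z) +
        ((Int.negOnePow (i * j) : ℤˣ) : ℤ) • toGLD.tr (by omega) (br j (i + k) y (br i k x z))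

namespace DGLA

/-- The differential as a linear map. -/
def dLin (L : DGLA) (i : ℤ) : L.V i →ₗ[ℂ] L.V (i + 1) :=
  { toFun := L.d i, map_add' := L.d_add i, map_smul' := L.d_smul i }

/-- The bracket as a bilinear map. -/
def brLin (L : DGLA) (i j : ℤ) : L.V i →ₗ[ℂ] L.V j →ₗ[ℂ] L.V (i + j) :=
  LinearMap.mk₂ ℂ (L.br i j) (L.br_add_left i j) (fun c x y => L.br_smul_left i j c x y)
    (L.br_add_right i j) (fun c x y => L.br_smul_right i j c x y)

end DGLA

/-- Morphism of (differential) graded Lie algebras (data-level). -/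
structure GLDHom (L M : GLD) where
  f : ∀ i, L.V i → M.V i
  f_add : ∀ i (x y : L.V i), f i (x + y) = f i x + f i y
  f_smul : ∀ i (c : ℂ) (x : L.V i), f i (c • x) = c • f i x
  f_d : ∀ i (x : L.V i), f (i + 1) (L.d i x) = M.d i (f i x)
  f_br : ∀ i j (x : L.V i) (y : L.V j), f (i + j) (L.br i j x y) = M.br i j (f i x) (f j y)

/-- The components of a morphism as linear maps. -/
def GLDHom.lin {L M : GLD} (h : GLDHom L M) (i : ℤ) : L.V i →ₗ[ℂ] M.V i :=
  { toFun := h.f i, map_add' := h.f_add i, map_smul' := h.f_smul i }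

section ArtinBase

variable (A : Type) [CommRing A] [Algebra ℂ A] [IsLocalRing A]

/-- The maximal ideal of a local `ℂ`-algebra. -/
abbrev mA : Ideal A := IsLocalRing.maximalIdeal A

/-- Multiplication of the maximal ideal, as a `ℂ`-bilinear map. -/
def mMul : (mA A) →ₗ[ℂ] (mA A) →ₗ[ℂ] (mA A) :=
  LinearMap.mk₂ ℂ (fun x y => ⟨x.1 * y.1, Ideal.mul_mem_left _ _ y.2⟩)
    (fun x x' y => by ext; simp [add_mul])
    (fun c x y => by ext; simp [smul_mul_assoc])
    (fun x y y' => by ext; simp [mul_add])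
    (fun c x y => by ext; simp [mul_smul_comm])

/-- For a DGLA `L`, the graded Lie data on `L ⊗ m_A`. -/
def DGLA.ten (L : DGLA) : GLD where
  V i := L.V i ⊗[ℂ] (mA A)
  d i := fun x => LinearMap.rTensor (mA A) (L.dLin i) x
  br i j := fun x y =>
    TensorProduct.curry
      ((TensorProduct.map (TensorProduct.lift (L.brLin i j)) (TensorProduct.lift (mMul A)))
        ∘ₗ (TensorProduct.tensorTensorTensorComm ℂ (L.V i) (mA A) (L.V j) (mA A)).toLinearMap)
      x y

end ArtinBase
namespace GLD

/-- Polynomial differential forms `W[t,dt]`: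
in degree `n` an element is `(p, q)` representing `Σᵢ pᵢ tⁱ + Σᵢ qᵢ tⁱ dt`,
with `pᵢ ∈ W^n` and `qᵢ ∈ W^{n-1}`. -/
def tdt (W : GLD) : GLD where
  V n := (ℕ →₀ W.V n) × (ℕ →₀ W.V (n - 1))
  d n x :=
    (x.1.sum fun i v => Finsupp.single i (W.d n v),
      (x.2.sum fun i v => Finsupp.single i (W.tr (by omega) (W.d (n - 1) v))) +
        ((Int.negOnePow n : ℤˣ) : ℤ) •
          x.1.sum fun i v => Finsupp.single (i - 1) ((i : ℂ) • W.tr (by omega) v))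
  br n m x y :=
    (x.1.sum fun i v => y.1.sum fun j w => Finsupp.single (i + j) (W.br n m v w),
      (x.1.sum fun i v => y.2.sum fun j w =>
          Finsupp.single (i + j) (W.tr (by omega) (W.br n (m - 1) v w))) +
        ((Int.negOnePow m : ℤˣ) : ℤ) •
          x.2.sum fun i v => y.1.sum fun j w =>
            Finsupp.single (i + j) (W.tr (by omega) (W.br (n - 1) m v w)))

/-- Evaluation `e_a : W[t,dt] → W` at a point `a ∈ ℂ`. -/
def evalT (W : GLD) (a : ℂ) (n : ℤ) (x : (W.tdt).V n) : W.V n :=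
  x.1.sum fun i v => (a ^ i) • v

/-- The inclusion `W → W[t,dt]` of constant polynomials. -/
def constT (W : GLD) (n : ℤ) (v : W.V n) : (W.tdt).V n :=
  (Finsupp.single 0 v, 0)

/-- The integral operator `∫₀¹ : W[t,dt] → W` of degree `-1`. -/
def int01 (W : GLD) (n : ℤ) (x : (W.tdt).V n) : W.V (n - 1) :=
  x.2.sum fun i v => (((i : ℂ) + 1))⁻¹ • v

/-- The integral operator `∫₀ᵗ`, returning the polynomial primitive of the `dt`-part. -/
def int0t (W : GLD) (n : ℤ) (x : (W.tdt).V n) : ℕ →₀ W.V (n - 1) :=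
  x.2.sum fun i v => Finsupp.single (i + 1) ((((i : ℂ) + 1))⁻¹ • v)

/-- The standard homotopy `K(m(t,dt)) = t∫₀¹ m − ∫₀ᵗ m` on `W[t,dt]`, of degree `-1`. -/
def Ktdt (W : GLD) (n : ℤ) (x : (W.tdt).V n) : (W.tdt).V (n - 1) :=
  (Finsupp.single 1 (W.int01 n x) - W.int0t n x, 0)

/-- A degreewise map between graded objects is a quasi-isomorphism: elementwise,
it induces a bijection on cohomology in every degree. -/
def IsQuasiIso (L M : GLD) (f : ∀ i, L.V i → M.V i) : Prop :=
  ∀ i : ℤ,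
    (∀ x : M.V i, M.d i x = 0 →
      ∃ y : L.V i, L.d i y = 0 ∧ ∃ z : M.V (i - 1), x = f i y + M.tr (by omega) (M.d (i - 1) z)) ∧
    (∀ y : L.V i, L.d i y = 0 →
      (∃ z : M.V (i - 1), f i y = M.tr (by omega) (M.d (i - 1) z)) →
      ∃ w : L.V (i - 1), y = L.tr (by omega) (L.d (i - 1) w))

/-- Extension of a degreewise map to polynomial differential forms, coefficientwise. -/
def tdtMap {W W' : GLD} (f : ∀ i, W.V i → W'.V i) (n : ℤ) (x : (W.tdt).V n) : (W'.tdt).V n :=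
  (x.1.sum fun i v => Finsupp.single i (f n v),
   x.2.sum fun i v => Finsupp.single i (f (n - 1) v))

end GLD

section Pair

variable (L M N : DGLA) (h : GLDHom L.toGLD M.toGLD) (g : GLDHom N.toGLD M.toGLD)
variable (A : Type) [CommRing A] [Algebra ℂ A] [IsLocalRing A]

/-- The space of triples `(x, y, p) ∈ (L¹ ⊗ m_A) × (N¹ ⊗ m_A) × (M⁰ ⊗ m_A)`;
the element `p` stands for the exponential `e^p ∈ exp(M⁰ ⊗ m_A)`. -/
abbrev TripleSp := ((L.ten A).V 1) × ((N.ten A).V 1) × ((M.ten A).V 0)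

/-- Extension `h ⊗ id` of a morphism to coefficients in `m_A`. -/
def hTen (i : ℤ) : (L.ten A).V i → (M.ten A).V i :=
  fun x => LinearMap.rTensor (mA A) (h.lin i) x

/-- Extension `g ⊗ id` of a morphism to coefficients in `m_A`. -/
def gTen (i : ℤ) : (N.ten A).V i → (M.ten A).V i :=
  fun x => LinearMap.rTensor (mA A) (g.lin i) x

/-- The Maurer-Cartan set `MC_{(h,g)}(A)`: triples `(x, y, e^p)` with
`dx + ½[x,x] = 0`, `dy + ½[y,y] = 0` and `g(y) = e^p * h(x)`. -/
def MCset : Set (TripleSp L M N A) :=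
  {w | (L.ten A).MC1 w.1 ∧ (N.ten A).MC1 w.2.1 ∧
    gTen M N g A 1 w.2.1 = (M.ten A).gauge w.2.2 (hTen L M h A 1 w.1)}

/-- The gauge relation on `MC_{(h,g)}(A)`: `(x₁,y₁,e^{p₁}) ∼ (x₂,y₂,e^{p₂})` iff there are
`a ∈ L⁰ ⊗ m_A`, `b ∈ N⁰ ⊗ m_A`, `c ∈ M⁻¹ ⊗ m_A` with `x₂ = e^a * x₁`, `y₂ = e^b * y₁` and
`e^{p₂} = e^{g(b)} e^T e^{p₁} e^{−h(a)}`, where `T = dc + [g(y₁), c]` and the products of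
exponentials are computed by the Baker-Campbell-Hausdorff formula. -/
def gaugeRel (w w' : TripleSp L M N A) : Prop :=
  ∃ (a : (L.ten A).V 0) (b : (N.ten A).V 0) (c : (M.ten A).V (-1)),
    w'.1 = (L.ten A).gauge a w.1 ∧
    w'.2.1 = (N.ten A).gauge b w.2.1 ∧
    w'.2.2 = (M.ten A).bch (gTen M N g A 0 b)
      ((M.ten A).bch
        ((M.ten A).tr (show (-1:ℤ)+1 = 0 by omega) ((M.ten A).d (-1) c) +
          (M.ten A).tr (show (1:ℤ)+(-1) = 0 by omega)
            ((M.ten A).br 1 (-1) (gTen M N g A 1 w.2.1) c))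
        ((M.ten A).bch w.2.2 (- hTen L M h A 0 a)))

end Pair

section Push

variable {B A : Type} [CommRing B] [Algebra ℂ B] [IsLocalRing B]
  [CommRing A] [Algebra ℂ A] [IsLocalRing A]

/-- Restriction of a `ℂ`-algebra morphism to the maximal ideals, as a `ℂ`-linear map. -/
def mRes (φ : B →ₐ[ℂ] A) (hφ : ∀ x : mA B, φ x.1 ∈ mA A) : (mA B) →ₗ[ℂ] (mA A) where
  toFun := fun x => ⟨φ x.1, hφ x⟩
  map_add' := by intro x y; ext; simp
  map_smul' := by intro c x; ext; simp [Algebra.smul_def]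

/-- Pushforward `L ⊗ m_B → L ⊗ m_A` along a morphism of local `ℂ`-algebras. -/
def pushV (L : DGLA) (φ : B →ₐ[ℂ] A) (hφ : ∀ x : mA B, φ x.1 ∈ mA A) (i : ℤ) :
    (L.ten B).V i → (L.ten A).V i :=
  fun x => LinearMap.lTensor (L.V i) (mRes φ hφ) x

/-- Pushforward of Maurer-Cartan triples along a morphism of local `ℂ`-algebras. -/
def pushTriple (L M N : DGLA) (φ : B →ₐ[ℂ] A) (hφ : ∀ x : mA B, φ x.1 ∈ mA A)
    (w : TripleSp L M N B) : TripleSp L M N A :=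
  (pushV L φ hφ 1 w.1, pushV N φ hφ 1 w.2.1, pushV M φ hφ 0 w.2.2)

end Push

section S1

variable (B C A : Type) [CommRing B] [Algebra ℂ B] [IsLocalRing B] [IsArtinianRing B]
  [CommRing C] [Algebra ℂ C] [IsLocalRing C] [IsArtinianRing C]
  [CommRing A] [Algebra ℂ A] [IsLocalRing A] [IsArtinianRing A]

/-- The fiber product `B ×_A C` of `ℂ`-algebras, as a subalgebra of `B × C`. -/
def fiberProd (f : B →ₐ[ℂ] A) (g' : C →ₐ[ℂ] A) : Subalgebra ℂ (B × C) :=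
  AlgHom.equalizer (f.comp (AlgHom.fst ℂ B C)) (g'.comp (AlgHom.snd ℂ B C))

/-- The projection `B ×_A C → B`. -/
def fpFst (f : B →ₐ[ℂ] A) (g' : C →ₐ[ℂ] A) : (fiberProd B C A f g') →ₐ[ℂ] B :=
  (AlgHom.fst ℂ B C).comp (fiberProd B C A f g').val

/-- The projection `B ×_A C → C`. -/
def fpSnd (f : B →ₐ[ℂ] A) (g' : C →ₐ[ℂ] A) : (fiberProd B C A f g') →ₐ[ℂ] C :=
  (AlgHom.snd ℂ B C).comp (fiberProd B C A f g').val

end S1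


section AuxBasic
variable {B A : Type} [CommRing B] [Algebra ℂ B] [IsLocalRing B]
  [CommRing A] [Algebra ℂ A] [IsLocalRing A]

lemma ten_induction {L : DGLA} {i : ℤ} {P : (L.ten A).V i → Prop} (x : (L.ten A).V i)
    (zero : P 0) (tmul : ∀ (v : L.V i) (b : mA A), P (v ⊗ₜ[ℂ] b))
    (add : ∀ x y, P x → P y → P (x + y)) : P x :=
  TensorProduct.induction_on x zero tmul add

lemma ten_d_tmul (L : DGLA) (i : ℤ) (v : L.V i) (x : mA A) :
    (L.ten A).d i (v ⊗ₜ[ℂ] x) = (L.d i v) ⊗ₜ[ℂ] x := rfl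

lemma ten_br_tmul (L : DGLA) (i j : ℤ) (v : L.V i) (w : L.V j) (x y : mA A) :
    (L.ten A).br i j (v ⊗ₜ[ℂ] x) (w ⊗ₜ[ℂ] y) = (L.br i j v w) ⊗ₜ[ℂ] (mMul A x y) := by
  simp [DGLA.ten, mMul, DGLA.brLin]

lemma tr_rfl (G : GLD) {i : ℤ} (x : G.V i) : G.tr rfl x = x := rfl

lemma pushV_tmul (L : DGLA) (φ : B →ₐ[ℂ] A) (hφ) (i : ℤ) (v : L.V i) (x : mA B) :
    pushV L φ hφ i (v ⊗ₜ[ℂ] x) = v ⊗ₜ[ℂ] (mRes φ hφ x) := rfl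

end AuxBasic
section AuxPush
variable {B A : Type} [CommRing B] [Algebra ℂ B] [IsLocalRing B]
  [CommRing A] [Algebra ℂ A] [IsLocalRing A]
variable (L M N : DGLA) (φ : B →ₐ[ℂ] A) (hφ : ∀ x : mA B, φ x.1 ∈ mA A)

lemma mRes_mul (x y : mA B) :
    mRes φ hφ (mMul B x y) = mMul A (mRes φ hφ x) (mRes φ hφ y) := by
  ext; simp [mRes, mMul]

lemma pushV_add (i : ℤ) (x y : (L.ten B).V i) :
    pushV L φ hφ i (x + y) = pushV L φ hφ i x + pushV L φ hφ i y :=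
  map_add _ _ _

lemma pushV_zero (i : ℤ) : pushV L φ hφ i 0 = 0 := map_zero _

lemma pushV_smul (i : ℤ) (c : ℂ) (x : (L.ten B).V i) :
    pushV L φ hφ i (c • x) = c • pushV L φ hφ i x := map_smul _ _ _

lemma pushV_sub (i : ℤ) (x y : (L.ten B).V i) :
    pushV L φ hφ i (x - y) = pushV L φ hφ i x - pushV L φ hφ i y :=
  map_sub _ _ _

lemma pushV_neg (i : ℤ) (x : (L.ten B).V i) :
    pushV L φ hφ i (-x) = - pushV L φ hφ i x := map_neg _ _

lemma pushV_tr {i j : ℤ} (h : i = j) (x : (L.ten B).V i) :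
    pushV L φ hφ j ((L.ten B).tr h x) = (L.ten A).tr h (pushV L φ hφ i x) := by
  subst h; rfl

lemma pushV_d (i : ℤ) (x : (L.ten B).V i) :
    pushV L φ hφ (i + 1) ((L.ten B).d i x) = (L.ten A).d i (pushV L φ hφ i x) := by
  induction x using ten_induction with
  | zero => rw [pushV_zero]; exact (map_zero _).trans (map_zero _).symm
  | tmul v b => rfl
  | add x y hx hy =>
      have hdB : (L.ten B).d i (x + y) = (L.ten B).d i x + (L.ten B).d i y := map_add _ _ _
      have hdA : ∀ u v : (L.ten A).V i, (L.ten A).d i (u + v) = (L.ten A).d i u + (L.ten A).d i v :=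
        fun u v => map_add _ _ _
      rw [hdB, pushV_add, hx, hy, pushV_add, hdA]

lemma ten_br_add_left (i j : ℤ) (x x' : (L.ten A).V i) (y : (L.ten A).V j) :
    (L.ten A).br i j (x + x') y = (L.ten A).br i j x y + (L.ten A).br i j x' y := by
  have key : ∀ (F : (L.V i ⊗[ℂ] mA A) →ₗ[ℂ] (L.V j ⊗[ℂ] mA A) →ₗ[ℂ] (L.V (i+j) ⊗[ℂ] mA A)) (x x' : L.V i ⊗[ℂ] mA A) y,
      F (x + x') y = F x y + F x' y := fun F x x' y => LinearMap.map_add₂ F x x' y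
  exact key _ x x' y

lemma ten_br_add_right (i j : ℤ) (x : (L.ten A).V i) (y y' : (L.ten A).V j) :
    (L.ten A).br i j x (y + y') = (L.ten A).br i j x y + (L.ten A).br i j x y' :=
  map_add _ _ _

lemma ten_br_smul_left (i j : ℤ) (c : ℂ) (x : (L.ten A).V i) (y : (L.ten A).V j) :
    (L.ten A).br i j (c • x) y = c • (L.ten A).br i j x y := by
  have key : ∀ (F : (L.V i ⊗[ℂ] mA A) →ₗ[ℂ] (L.V j ⊗[ℂ] mA A) →ₗ[ℂ] (L.V (i+j) ⊗[ℂ] mA A)) (x : L.V i ⊗[ℂ] mA A) y,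
      F (c • x) y = c • F x y := fun F x y => LinearMap.map_smul₂ F c x y
  exact key _ x y

lemma ten_br_smul_right (i j : ℤ) (c : ℂ) (x : (L.ten A).V i) (y : (L.ten A).V j) :
    (L.ten A).br i j x (c • y) = c • (L.ten A).br i j x y :=
  map_smul _ _ _

lemma ten_br_zero_left (i j : ℤ) (y : (L.ten A).V j) :
    (L.ten A).br i j 0 y = 0 := by
  have key : ∀ (F : (L.V i ⊗[ℂ] mA A) →ₗ[ℂ] (L.V j ⊗[ℂ] mA A) →ₗ[ℂ] (L.V (i+j) ⊗[ℂ] mA A)) y,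
      F 0 y = 0 := fun F y => LinearMap.map_zero₂ F y
  exact key _ y

lemma ten_br_zero_right (i j : ℤ) (x : (L.ten A).V i) :
    (L.ten A).br i j x 0 = 0 := map_zero _

lemma pushV_br (i j : ℤ) (x : (L.ten B).V i) (y : (L.ten B).V j) :
    pushV L φ hφ (i + j) ((L.ten B).br i j x y)
      = (L.ten A).br i j (pushV L φ hφ i x) (pushV L φ hφ j y) := by
  induction x using ten_induction with
  | zero => rw [ten_br_zero_left, pushV_zero, pushV_zero, ten_br_zero_left]
  | add x x' hx hx' =>
      rw [ten_br_add_left, pushV_add, hx, hx', pushV_add, ten_br_add_left]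
  | tmul v b =>
      induction y using ten_induction with
      | zero => rw [ten_br_zero_right L i j (v ⊗ₜ[ℂ] b), pushV_zero, pushV_zero, ten_br_zero_right]
      | add y y' hy hy' =>
          rw [ten_br_add_right L i j (v ⊗ₜ[ℂ] b), pushV_add, hy, hy', pushV_add, ten_br_add_right]
      | tmul w c =>
          rw [ten_br_tmul, pushV_tmul, pushV_tmul, pushV_tmul, ten_br_tmul, mRes_mul]

lemma pushV_ad01 (a : (L.ten B).V 0) (x : (L.ten B).V 1) :
    pushV L φ hφ 1 ((L.ten B).ad01 a x)
      = (L.ten A).ad01 (pushV L φ hφ 0 a) (pushV L φ hφ 1 x) := by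
  unfold GLD.ad01
  rw [pushV_tr, pushV_br]

lemma pushV_hTen (h : GLDHom L.toGLD M.toGLD) (i : ℤ) (x : (L.ten B).V i) :
    pushV M φ hφ i (hTen L M h B i x) = hTen L M h A i (pushV L φ hφ i x) := by
  induction x using ten_induction with
  | zero =>
    rw [show ((0 : (L.ten B).V i)) = (0 : L.V i ⊗[ℂ] mA B) from rfl]
    simp [hTen, pushV, pushV_zero]
    rfl
  | tmul v b => rfl
  | add x y hx hy =>
      have h1 : ∀ (R : Type) [CommRing R] [Algebra ℂ R] [IsLocalRing R]
          (u v : (L.ten R).V i), hTen L M h R i (u + v) = hTen L M h R i u + hTen L M h R i v :=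
        fun R _ _ _ u v => map_add _ _ _
      rw [h1, pushV_add, hx, hy, pushV_add, h1]

end AuxPush
section Nilp
variable (A : Type) [CommRing A] [Algebra ℂ A] [IsLocalRing A]

/-- Elements of the maximal ideal lying in its `n`-th power, as a `ℂ`-submodule. -/
def Jpow (n : ℕ) : Submodule ℂ (mA A) where
  carrier := {x | x.1 ∈ (IsLocalRing.maximalIdeal A) ^ n}
  add_mem' := fun ha hb => Ideal.add_mem _ ha hb
  zero_mem' := by simp
  smul_mem' := fun c x hx => by
    have : ((c • x : mA A) : A) = algebraMap ℂ A c * x.1 := by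
      simp [Algebra.smul_def]
    simpa [this] using Ideal.mul_mem_left _ _ hx

/-- Filtration of `V ⊗ m_A` by powers of the maximal ideal. -/
def NsubT (V : Type) [AddCommGroup V] [Module ℂ V] (n : ℕ) :
    Submodule ℂ (V ⊗[ℂ] (mA A)) :=
  Submodule.span ℂ {t | ∃ (v : V) (x : mA A), x ∈ Jpow A n ∧ t = v ⊗ₜ[ℂ] x}

variable {A}

lemma mem_NsubT_one {V : Type} [AddCommGroup V] [Module ℂ V] (t : V ⊗[ℂ] (mA A)) :
    t ∈ NsubT A V 1 := by
  have h1 : t ∈ (⊤ : Submodule ℂ (V ⊗[ℂ] (mA A))) := trivial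
  rw [← TensorProduct.span_tmul_eq_top ℂ V (mA A)] at h1
  refine Submodule.span_mono ?_ h1
  rintro s ⟨v, x, rfl⟩
  exact ⟨v, x, by simpa [Jpow] using x.2, rfl⟩

lemma NsubT_anti {V : Type} [AddCommGroup V] [Module ℂ V] {m n : ℕ} (h : m ≤ n) :
    NsubT A V n ≤ NsubT A V m := by
  refine Submodule.span_mono ?_
  rintro s ⟨v, x, hx, rfl⟩
  exact ⟨v, x, Ideal.pow_le_pow_right h hx, rfl⟩

lemma tr_mem_NsubT (L : DGLA) {i j : ℤ} (h : i = j) {n : ℕ} {x : (L.ten A).V i}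
    (hx : x ∈ NsubT A (L.V i) n) : (L.ten A).tr h x ∈ NsubT A (L.V j) n := by
  subst h; exact hx

lemma br_mem_NsubT (L : DGLA) {i j : ℤ} {a b : ℕ} {x : (L.ten A).V i} {y : (L.ten A).V j}
    (hx : x ∈ NsubT A (L.V i) a) (hy : y ∈ NsubT A (L.V j) b) :
    (L.ten A).br i j x y ∈ NsubT A (L.V (i + j)) (a + b) := by
  induction hx using Submodule.span_induction with
  | zero => erw [ten_br_zero_left]; exact Submodule.zero_mem _
  | add x x' _ _ hx hx' => erw [ten_br_add_left]; exact Submodule.add_mem _ hx hx'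
  | smul c x _ hx => erw [ten_br_smul_left]; exact Submodule.smul_mem _ _ hx
  | mem x hgen =>
    obtain ⟨v, p, hp, rfl⟩ := hgen
    induction hy using Submodule.span_induction with
    | zero => erw [ten_br_zero_right]; exact Submodule.zero_mem _
    | add y y' _ _ hy hy' => erw [ten_br_add_right]; exact Submodule.add_mem _ hy hy'
    | smul c y _ hy => erw [ten_br_smul_right]; exact Submodule.smul_mem _ _ hy
    | mem y hgen' =>
      obtain ⟨w, q, hq, rfl⟩ := hgen'
      rw [ten_br_tmul]
      refine Submodule.subset_span ⟨_, _, ?_, rfl⟩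
      have : (mMul A p q).1 ∈ (IsLocalRing.maximalIdeal A) ^ (a + b) := by
        rw [pow_add]
        exact Ideal.mul_mem_mul hp hq
      exact this

lemma ad01_mem_NsubT (L : DGLA) (a : (L.ten A).V 0) {n : ℕ} {x : (L.ten A).V 1}
    (hx : x ∈ NsubT A (L.V 1) n) :
    (L.ten A).ad01 a x ∈ NsubT A (L.V 1) (n + 1) := by
  have ha : a ∈ NsubT A (L.V 0) 1 := mem_NsubT_one a
  have := br_mem_NsubT L ha hx
  have h2 := tr_mem_NsubT L (show (0:ℤ) + 1 = 1 by omega) this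
  unfold GLD.ad01
  refine NsubT_anti ?_ h2
  omega

lemma iter_ad01_mem_NsubT (L : DGLA) (a : (L.ten A).V 0) {x : (L.ten A).V 1}
    (hx : x ∈ NsubT A (L.V 1) 1) (n : ℕ) :
    ((L.ten A).ad01 a)^[n] x ∈ NsubT A (L.V 1) (n + 1) := by
  induction n with
  | zero => simpa using hx
  | succ n ih =>
      rw [Function.iterate_succ_apply']
      have := ad01_mem_NsubT L a ih
      exact NsubT_anti (by omega) this

lemma NsubT_eq_bot [IsArtinianRing A] :
    ∃ K : ℕ, ∀ (V : Type) [AddCommGroup V] [Module ℂ V],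
      ∀ n ≥ K, ∀ t ∈ NsubT A V n, t = 0 := by
  have hjac : Ideal.jacobson (⊥ : Ideal A) = IsLocalRing.maximalIdeal A :=
    IsLocalRing.jacobson_eq_maximalIdeal ⊥ bot_ne_top
  obtain ⟨K, hK⟩ := IsArtinianRing.isNilpotent_jacobson_bot (R := A)
  rw [hjac] at hK
  refine ⟨K, fun V _ _ n hn t ht => ?_⟩
  have hb : NsubT A V n ≤ ⊥ := by
    unfold NsubT
    rw [Submodule.span_le]
    rintro s ⟨v, x, hx, rfl⟩
    have hxn : x.1 ∈ (IsLocalRing.maximalIdeal A) ^ n := hx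
    have : (IsLocalRing.maximalIdeal A) ^ n = ⊥ := by
      have : (IsLocalRing.maximalIdeal A) ^ n ≤ (IsLocalRing.maximalIdeal A) ^ K :=
        Ideal.pow_le_pow_right hn
      rw [hK] at this
      exact le_bot_iff.mp this
    have hx0 : x = 0 := Subtype.ext (by simpa [this] using hxn)
    simp [hx0]
  simpa using hb ht

lemma gauge_family_support_finite [IsArtinianRing A] (L : DGLA) (a : (L.ten A).V 0)
    (s : (L.ten A).V 1) :
    (Function.support fun n : ℕ =>
      (((n+1).factorial : ℂ))⁻¹ • ((L.ten A).ad01 a)^[n] s).Finite := by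
  obtain ⟨K, hK⟩ := NsubT_eq_bot (A := A)
  refine Set.Finite.subset (Set.finite_Iio K) ?_
  intro n hn
  by_contra hlt
  simp only [Set.mem_Iio, not_lt] at hlt
  apply hn
  have hs : s ∈ NsubT A (L.V 1) 1 := mem_NsubT_one s
  have := iter_ad01_mem_NsubT L a hs n
  have h0 : ((L.ten A).ad01 a)^[n] s = 0 := hK _ (n+1) (by omega) _ this
  simp [h0]

end Nilp
section AuxGauge
variable {B A : Type} [CommRing B] [Algebra ℂ B] [IsLocalRing B] [IsArtinianRing B]
  [CommRing A] [Algebra ℂ A] [IsLocalRing A]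
variable (L : DGLA) (φ : B →ₐ[ℂ] A) (hφ : ∀ x : mA B, φ x.1 ∈ mA A)

lemma pushV_iter_ad01 (a : (L.ten B).V 0) (s : (L.ten B).V 1) (n : ℕ) :
    pushV L φ hφ 1 (((L.ten B).ad01 a)^[n] s)
      = ((L.ten A).ad01 (pushV L φ hφ 0 a))^[n] (pushV L φ hφ 1 s) := by
  induction n with
  | zero => rfl
  | succ n ih =>
      rw [Function.iterate_succ_apply', Function.iterate_succ_apply',
        pushV_ad01, ih]

lemma pushV_gauge (a : (L.ten B).V 0) (x : (L.ten B).V 1) :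
    pushV L φ hφ 1 ((L.ten B).gauge a x)
      = (L.ten A).gauge (pushV L φ hφ 0 a) (pushV L φ hφ 1 x) := by
  unfold GLD.gauge
  rw [pushV_add]
  congr 1
  have hfin := gauge_family_support_finite L a
    ((L.ten B).ad01 a x - (L.ten B).tr (by omega) ((L.ten B).d 0 a))
  have hmap : pushV L φ hφ 1 (∑ᶠ n : ℕ, (((n+1).factorial : ℂ))⁻¹ •
      ((L.ten B).ad01 a)^[n]
        ((L.ten B).ad01 a x - (L.ten B).tr (by omega) ((L.ten B).d 0 a)))
      = ∑ᶠ n : ℕ, pushV L φ hφ 1 ((((n+1).factorial : ℂ))⁻¹ •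
      ((L.ten B).ad01 a)^[n]
        ((L.ten B).ad01 a x - (L.ten B).tr (by omega) ((L.ten B).d 0 a))) :=
    (LinearMap.lTensor (L.V 1) (mRes φ hφ)).toAddMonoidHom.map_finsum hfin
  rw [hmap]
  refine finsum_congr fun n => ?_
  show pushV L φ hφ 1 _ = _
  rw [pushV_smul, pushV_iter_ad01, pushV_sub, pushV_ad01, pushV_tr, pushV_d]

end AuxGauge
section Pullback

variable {P Mb Mc Ma : Type} [AddCommGroup P] [Module ℂ P] [AddCommGroup Mb] [Module ℂ Mb]
  [AddCommGroup Mc] [Module ℂ Mc] [AddCommGroup Ma] [Module ℂ Ma]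
  (V : Type) [AddCommGroup V] [Module ℂ V]
  (ρ₁ : P →ₗ[ℂ] Mb) (ρ₂ : P →ₗ[ℂ] Mc) (δ₁ : Mb →ₗ[ℂ] Ma) (δ₂ : Mc →ₗ[ℂ] Ma)

private lemma lT_fst (t : V ⊗[ℂ] (Mb × Mc)) :
    LinearMap.lTensor V (LinearMap.fst ℂ Mb Mc) t = (TensorProduct.prodRight ℂ ℂ V Mb Mc t).1 := by
  induction t using TensorProduct.induction_on with
  | zero => simp
  | tmul v b => obtain ⟨b1, b2⟩ := b; simp
  | add x y hx hy => simp [map_add, hx, hy]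

private lemma lT_snd (t : V ⊗[ℂ] (Mb × Mc)) :
    LinearMap.lTensor V (LinearMap.snd ℂ Mb Mc) t = (TensorProduct.prodRight ℂ ℂ V Mb Mc t).2 := by
  induction t using TensorProduct.induction_on with
  | zero => simp
  | tmul v b => obtain ⟨b1, b2⟩ := b; simp
  | add x y hx hy => simp [map_add, hx, hy]

theorem tensor_pullback
    (hinj : ∀ x y : P, ρ₁ x = ρ₁ y → ρ₂ x = ρ₂ y → x = y)
    (hker : ∀ p : P, δ₁ (ρ₁ p) = δ₂ (ρ₂ p))
    (hsurj : ∀ (b : Mb) (c : Mc), δ₁ b = δ₂ c → ∃ p, ρ₁ p = b ∧ ρ₂ p = c) :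
    (∀ x y : V ⊗[ℂ] P, LinearMap.lTensor V ρ₁ x = LinearMap.lTensor V ρ₁ y →
       LinearMap.lTensor V ρ₂ x = LinearMap.lTensor V ρ₂ y → x = y) ∧
    (∀ (u : V ⊗[ℂ] Mb) (v : V ⊗[ℂ] Mc),
       LinearMap.lTensor V δ₁ u = LinearMap.lTensor V δ₂ v →
       ∃ w : V ⊗[ℂ] P, LinearMap.lTensor V ρ₁ w = u ∧ LinearMap.lTensor V ρ₂ w = v) := by
  set ρ : P →ₗ[ℂ] Mb × Mc := ρ₁.prod ρ₂ with hρ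
  set δ : Mb × Mc →ₗ[ℂ] Ma := δ₁ ∘ₗ LinearMap.fst ℂ Mb Mc - δ₂ ∘ₗ LinearMap.snd ℂ Mb Mc with hδ
  have hρinj : Function.Injective ρ := by
    intro x y hxy
    have h1 : ρ₁ x = ρ₁ y := congrArg Prod.fst hxy
    have h2 : ρ₂ x = ρ₂ y := congrArg Prod.snd hxy
    exact hinj x y h1 h2
  have hexact : Function.Exact ρ δ := by
    intro z
    constructor
    · intro hz
      have : δ₁ z.1 = δ₂ z.2 := by
        have := sub_eq_zero.mp hz
        simpa [hδ] using this
      obtain ⟨p, hp1, hp2⟩ := hsurj z.1 z.2 this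
      exact ⟨p, by simp [hρ, LinearMap.prod_apply, hp1, hp2]⟩
    · rintro ⟨p, rfl⟩
      simp [hδ, hρ, sub_eq_zero, hker p]
  have hTinj : Function.Injective (LinearMap.lTensor V ρ) :=
    Module.Flat.lTensor_preserves_injective_linearMap ρ hρinj
  have hTex : Function.Exact (LinearMap.lTensor V ρ) (LinearMap.lTensor V δ) :=
    Module.Flat.lTensor_exact V hexact
  have hcomp1 : ∀ t : V ⊗[ℂ] P,
      LinearMap.lTensor V ρ₁ t = (TensorProduct.prodRight ℂ ℂ V Mb Mc (LinearMap.lTensor V ρ t)).1 := by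
    intro t
    rw [← lT_fst]
    rw [← LinearMap.lTensor_comp_apply]
    congr 1
  have hcomp2 : ∀ t : V ⊗[ℂ] P,
      LinearMap.lTensor V ρ₂ t = (TensorProduct.prodRight ℂ ℂ V Mb Mc (LinearMap.lTensor V ρ t)).2 := by
    intro t
    rw [← lT_snd, ← LinearMap.lTensor_comp_apply]
    congr 1
  constructor
  · intro x y h1 h2
    apply hTinj
    apply (TensorProduct.prodRight ℂ ℂ V Mb Mc).injective
    apply Prod.ext
    · rw [← hcomp1, ← hcomp1, h1]
    · rw [← hcomp2, ← hcomp2, h2]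
  · intro u v huv
    set z := (TensorProduct.prodRight ℂ ℂ V Mb Mc).symm (u, v) with hz
    have hzu : LinearMap.lTensor V (LinearMap.fst ℂ Mb Mc) z = u := by
      rw [lT_fst]; simp [hz]
    have hzv : LinearMap.lTensor V (LinearMap.snd ℂ Mb Mc) z = v := by
      rw [lT_snd]; simp [hz]
    have hδz : LinearMap.lTensor V δ z = 0 := by
      rw [hδ, LinearMap.lTensor_sub, LinearMap.sub_apply,
        LinearMap.lTensor_comp, LinearMap.lTensor_comp,
        LinearMap.comp_apply, LinearMap.comp_apply, hzu, hzv, huv, sub_self]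
    obtain ⟨w, hw⟩ := (hTex z).mp hδz
    refine ⟨w, ?_, ?_⟩
    · rw [hcomp1 w, hw, ← lT_fst, hzu]
    · rw [hcomp2 w, hw, ← lT_snd, hzv]

end Pullback
section AuxMC
variable {B A : Type} [CommRing B] [Algebra ℂ B] [IsLocalRing B]
  [CommRing A] [Algebra ℂ A] [IsLocalRing A]
variable (L M N : DGLA) (φ : B →ₐ[ℂ] A) (hφ : ∀ x : mA B, φ x.1 ∈ mA A)

lemma pushV_MCexpr (x : (L.ten B).V 1) :
    pushV L φ hφ (1+1) ((L.ten B).d 1 x + (2:ℂ)⁻¹ • (L.ten B).br 1 1 x x)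
      = (L.ten A).d 1 (pushV L φ hφ 1 x)
        + (2:ℂ)⁻¹ • (L.ten A).br 1 1 (pushV L φ hφ 1 x) (pushV L φ hφ 1 x) := by
  rw [pushV_add, pushV_d, pushV_smul, pushV_br]

lemma pushV_MC1 {x : (L.ten B).V 1} (hx : (L.ten B).MC1 x) :
    (L.ten A).MC1 (pushV L φ hφ 1 x) := by
  unfold GLD.MC1 at hx ⊢
  rw [← pushV_MCexpr, hx, pushV_zero]

lemma gTen_eq_hTen (g : GLDHom N.toGLD M.toGLD) (i : ℤ) (x : (N.ten A).V i) :
    gTen M N g A i x = hTen N M g A i x := rfl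

lemma pushV_comp {P : Type} [CommRing P] [Algebra ℂ P] [IsLocalRing P]
    (ψ : B →ₐ[ℂ] A) (φ' : P →ₐ[ℂ] B) (hψ : ∀ x : mA B, ψ x.1 ∈ mA A)
    (hφ' : ∀ x : mA P, φ' x.1 ∈ mA B) (h2 : ∀ x : mA P, (ψ.comp φ') x.1 ∈ mA A)
    (i : ℤ) (x : (L.ten P).V i) :
    pushV L ψ hψ i (pushV L φ' hφ' i x) = pushV L (ψ.comp φ') h2 i x := by
  show (LinearMap.lTensor (L.V i) (mRes ψ hψ) ∘ₗ LinearMap.lTensor (L.V i) (mRes φ' hφ')) x = _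
  rw [← LinearMap.lTensor_comp]
  have : mRes ψ hψ ∘ₗ mRes φ' hφ' = mRes (ψ.comp φ') h2 := by
    ext p; rfl
  rw [this]
  rfl

end AuxMC

section FP
variable {B C A : Type} [CommRing B] [Algebra ℂ B] [IsLocalRing B]
  [CommRing C] [Algebra ℂ C] [IsLocalRing C]
  [CommRing A] [Algebra ℂ A] [IsLocalRing A]
variable (f : B →ₐ[ℂ] A) (g' : C →ₐ[ℂ] A)
variable [IsLocalRing (fiberProd B C A f g')]
variable (hfst : ∀ x : mA (fiberProd B C A f g'), fpFst B C A f g' x.1 ∈ mA B)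
variable (hsnd : ∀ x : mA (fiberProd B C A f g'), fpSnd B C A f g' x.1 ∈ mA C)
variable (hf : ∀ x : mA B, f x.1 ∈ mA A) (hg' : ∀ x : mA C, g' x.1 ∈ mA A)

lemma fp_hinj : ∀ x y : mA (fiberProd B C A f g'),
    mRes (fpFst B C A f g') hfst x = mRes (fpFst B C A f g') hfst y →
    mRes (fpSnd B C A f g') hsnd x = mRes (fpSnd B C A f g') hsnd y → x = y := by
  intro x y h1 h2
  have e1 : fpFst B C A f g' x.1 = fpFst B C A f g' y.1 := congrArg Subtype.val h1
  have e2 : fpSnd B C A f g' x.1 = fpSnd B C A f g' y.1 := congrArg Subtype.val h2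
  exact Subtype.ext (Subtype.ext (Prod.ext e1 e2))

lemma fp_hker : ∀ p : mA (fiberProd B C A f g'),
    mRes f hf (mRes (fpFst B C A f g') hfst p) = mRes g' hg' (mRes (fpSnd B C A f g') hsnd p) := by
  intro p
  exact Subtype.ext p.1.2

lemma fp_hsurj : ∀ (b : mA B) (c : mA C), mRes f hf b = mRes g' hg' c →
    ∃ p : mA (fiberProd B C A f g'),
      mRes (fpFst B C A f g') hfst p = b ∧ mRes (fpSnd B C A f g') hsnd p = c := by
  intro b c h
  have hval : f b.1 = g' c.1 := congrArg Subtype.val h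
  have hmem : ((b.1, c.1) : B × C) ∈ fiberProd B C A f g' := hval
  set q : fiberProd B C A f g' := ⟨(b.1, c.1), hmem⟩ with hq
  have hqm : q ∈ mA (fiberProd B C A f g') := by
    rw [IsLocalRing.mem_maximalIdeal]
    intro hu
    have : IsUnit (fpFst B C A f g' q) := hu.map (fpFst B C A f g')
    exact (IsLocalRing.mem_maximalIdeal _).mp b.2 this
  exact ⟨⟨q, hqm⟩, Subtype.ext rfl, Subtype.ext rfl⟩

end FP
lemma pushV_congr {B A : Type} [CommRing B] [Algebra ℂ B] [IsLocalRing B]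
    [CommRing A] [Algebra ℂ A] [IsLocalRing A] (L : DGLA) {φ₁ φ₂ : B →ₐ[ℂ] A}
    (h : φ₁ = φ₂) (h₁ : ∀ x : mA B, φ₁ x.1 ∈ mA A) (h₂ : ∀ x : mA B, φ₂ x.1 ∈ mA A)
    (i : ℤ) (x : (L.ten B).V i) : pushV L φ₁ h₁ i x = pushV L φ₂ h₂ i x := by
  subst h; rfl


section S1

variable (B C A : Type) [CommRing B] [Algebra ℂ B] [IsLocalRing B] [IsArtinianRing B]
  [CommRing C] [Algebra ℂ C] [IsLocalRing C] [IsArtinianRing C]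
  [CommRing A] [Algebra ℂ A] [IsLocalRing A] [IsArtinianRing A]

set_option maxHeartbeats 1000000 in
set_option synthInstance.maxHeartbeats 1000000 in
/-- Homogeneity of the Maurer-Cartan functor `MC_{(h,g)}` associated with a pair of
morphisms of DGLAs `h : L → M`, `g : N → M`: for morphisms `B → A` and `C → A` of local
Artinian `ℂ`-algebras with residue field `ℂ` such that the fiber product `B ×_A C` is
again local Artinian, the natural map
`MC_{(h,g)}(B ×_A C) → MC_{(h,g)}(B) ×_{MC_{(h,g)}(A)} MC_{(h,g)}(C)` is bijective. -/
theorem statement1 (L M N : DGLA) (h : GLDHom L.toGLD M.toGLD) (g : GLDHom N.toGLD M.toGLD)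
    (hresA : Function.Bijective (algebraMap ℂ (IsLocalRing.ResidueField A)))
    (hresB : Function.Bijective (algebraMap ℂ (IsLocalRing.ResidueField B)))
    (hresC : Function.Bijective (algebraMap ℂ (IsLocalRing.ResidueField C)))
    (f : B →ₐ[ℂ] A) (g' : C →ₐ[ℂ] A)
    (instL : IsLocalRing (fiberProd B C A f g'))
    (instA : IsArtinianRing (fiberProd B C A f g'))
    (hresP : Function.Bijective
      (algebraMap ℂ (IsLocalRing.ResidueField (fiberProd B C A f g'))))
    (hfst : ∀ x : mA (fiberProd B C A f g'), fpFst B C A f g' x.1 ∈ mA B)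
    (hsnd : ∀ x : mA (fiberProd B C A f g'), fpSnd B C A f g' x.1 ∈ mA C)
    (hf : ∀ x : mA B, f x.1 ∈ mA A) (hg' : ∀ x : mA C, g' x.1 ∈ mA A) :
    Set.BijOn
      (fun w => (pushTriple L M N (fpFst B C A f g') hfst w,
                 pushTriple L M N (fpSnd B C A f g') hsnd w))
      (MCset L M N h g (fiberProd B C A f g'))
      {uv : TripleSp L M N B × TripleSp L M N C |
        uv.1 ∈ MCset L M N h g B ∧ uv.2 ∈ MCset L M N h g C ∧
        pushTriple L M N f hf uv.1 = pushTriple L M N g' hg' uv.2} := by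
  have key : ∀ (V : Type) [AddCommGroup V] [Module ℂ V],
      (∀ x y : V ⊗[ℂ] (mA (fiberProd B C A f g')),
        LinearMap.lTensor V (mRes (fpFst B C A f g') hfst) x
          = LinearMap.lTensor V (mRes (fpFst B C A f g') hfst) y →
        LinearMap.lTensor V (mRes (fpSnd B C A f g') hsnd) x
          = LinearMap.lTensor V (mRes (fpSnd B C A f g') hsnd) y → x = y) ∧
      (∀ (u : V ⊗[ℂ] (mA B)) (v : V ⊗[ℂ] (mA C)),
        LinearMap.lTensor V (mRes f hf) u = LinearMap.lTensor V (mRes g' hg') v →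
        ∃ w : V ⊗[ℂ] (mA (fiberProd B C A f g')), LinearMap.lTensor V (mRes (fpFst B C A f g') hfst) w = u ∧
          LinearMap.lTensor V (mRes (fpSnd B C A f g') hsnd) w = v) := by
    intro V _ _
    exact tensor_pullback V (mRes (fpFst B C A f g') hfst) (mRes (fpSnd B C A f g') hsnd)
      (mRes f hf) (mRes g' hg')
      (fp_hinj f g' hfst hsnd) (fp_hker f g' hfst hsnd hf hg')
      (fp_hsurj f g' hfst hsnd hf hg')
  have hcompAlg : f.comp (fpFst B C A f g') = g'.comp (fpSnd B C A f g') := by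
    ext p; exact p.2
  refine ⟨?_, ?_, ?_⟩
  · -- MapsTo
    rintro w ⟨h1, h2, h3⟩
    have h3B := congrArg (pushV M (fpFst B C A f g') hfst 1) h3
    rw [gTen_eq_hTen, pushV_hTen, pushV_gauge, pushV_hTen] at h3B
    have h3C := congrArg (pushV M (fpSnd B C A f g') hsnd 1) h3
    rw [gTen_eq_hTen, pushV_hTen, pushV_gauge, pushV_hTen] at h3C
    refine ⟨⟨pushV_MC1 L _ hfst h1, pushV_MC1 N _ hfst h2, ?_⟩,
            ⟨pushV_MC1 L _ hsnd h1, pushV_MC1 N _ hsnd h2, ?_⟩, ?_⟩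
    · rw [gTen_eq_hTen]; exact h3B
    · rw [gTen_eq_hTen]; exact h3C
    · have hcmem : ∀ x : mA (fiberProd B C A f g'), (f.comp (fpFst B C A f g')) x.1 ∈ mA A :=
        fun x => hf ⟨_, hfst x⟩
      have comp_eq : ∀ (X : DGLA) (i : ℤ) (x : (X.ten (fiberProd B C A f g')).V i),
          pushV X f hf i (pushV X (fpFst B C A f g') hfst i x)
            = pushV X g' hg' i (pushV X (fpSnd B C A f g') hsnd i x) := by
        intro X i x
        rw [pushV_comp X f (fpFst B C A f g') hf hfst hcmem,
          pushV_comp X g' (fpSnd B C A f g') hg' hsnd (hcompAlg ▸ hcmem)]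
        exact pushV_congr X hcompAlg _ _ i x
      exact Prod.ext (comp_eq L 1 w.1) (Prod.ext (comp_eq N 1 w.2.1) (comp_eq M 0 w.2.2))
  · -- InjOn
    intro w _ w' _ heq
    refine Prod.ext ((key (L.V 1)).1 w.1 w'.1
        (congrArg (fun z => z.1.1) heq) (congrArg (fun z => z.2.1) heq))
      (Prod.ext ((key (N.V 1)).1 w.2.1 w'.2.1
        (congrArg (fun z => z.1.2.1) heq) (congrArg (fun z => z.2.2.1) heq))
      ((key (M.V 0)).1 w.2.2 w'.2.2
        (congrArg (fun z => z.1.2.2) heq) (congrArg (fun z => z.2.2.2) heq)))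
  · -- SurjOn
    rintro ⟨u, v⟩ ⟨hu, hv, heq⟩
    obtain ⟨x, hx1, hx2⟩ := (key (L.V 1)).2 u.1 v.1 (congrArg (fun z => z.1) heq)
    obtain ⟨y, hy1, hy2⟩ := (key (N.V 1)).2 u.2.1 v.2.1 (congrArg (fun z => z.2.1) heq)
    obtain ⟨p, hp1, hp2⟩ := (key (M.V 0)).2 u.2.2 v.2.2 (congrArg (fun z => z.2.2) heq)
    have hxB : pushV L (fpFst B C A f g') hfst 1 x = u.1 := hx1
    have hxC : pushV L (fpSnd B C A f g') hsnd 1 x = v.1 := hx2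
    have hyB : pushV N (fpFst B C A f g') hfst 1 y = u.2.1 := hy1
    have hyC : pushV N (fpSnd B C A f g') hsnd 1 y = v.2.1 := hy2
    have hpB : pushV M (fpFst B C A f g') hfst 0 p = u.2.2 := hp1
    have hpC : pushV M (fpSnd B C A f g') hsnd 0 p = v.2.2 := hp2
    refine ⟨(x, y, p), ⟨?_, ?_, ?_⟩, ?_⟩
    · -- MC1 for x
      show (L.ten (fiberProd B C A f g')).d 1 x + (2:ℂ)⁻¹ • (L.ten (fiberProd B C A f g')).br 1 1 x x = 0
      refine (key (L.V (1+1))).1 _ 0 ?_ ?_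
      · show pushV L (fpFst B C A f g') hfst (1+1) _ = pushV L (fpFst B C A f g') hfst (1+1) 0
        erw [pushV_zero, pushV_MCexpr, hxB]
        exact hu.1
      · show pushV L (fpSnd B C A f g') hsnd (1+1) _ = pushV L (fpSnd B C A f g') hsnd (1+1) 0
        erw [pushV_zero, pushV_MCexpr, hxC]
        exact hv.1
    · -- MC1 for y
      show (N.ten (fiberProd B C A f g')).d 1 y + (2:ℂ)⁻¹ • (N.ten (fiberProd B C A f g')).br 1 1 y y = 0
      refine (key (N.V (1+1))).1 _ 0 ?_ ?_
      · show pushV N (fpFst B C A f g') hfst (1+1) _ = pushV N (fpFst B C A f g') hfst (1+1) 0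
        erw [pushV_zero, pushV_MCexpr, hyB]
        exact hu.2.1
      · show pushV N (fpSnd B C A f g') hsnd (1+1) _ = pushV N (fpSnd B C A f g') hsnd (1+1) 0
        erw [pushV_zero, pushV_MCexpr, hyC]
        exact hv.2.1
    · -- gauge compatibility
      refine (key (M.V 1)).1 _ _ ?_ ?_
      · show pushV M (fpFst B C A f g') hfst 1 (gTen M N g (fiberProd B C A f g') 1 y)
          = pushV M (fpFst B C A f g') hfst 1 ((M.ten (fiberProd B C A f g')).gauge p (hTen L M h (fiberProd B C A f g') 1 x))
        erw [gTen_eq_hTen, pushV_hTen, pushV_gauge, pushV_hTen, hxB, hyB, hpB]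
        exact hu.2.2
      · show pushV M (fpSnd B C A f g') hsnd 1 (gTen M N g (fiberProd B C A f g') 1 y)
          = pushV M (fpSnd B C A f g') hsnd 1 ((M.ten (fiberProd B C A f g')).gauge p (hTen L M h (fiberProd B C A f g') 1 x))
        erw [gTen_eq_hTen, pushV_hTen, pushV_gauge, pushV_hTen, hxC, hyC, hpC]
        exact hv.2.2
    · exact Prod.ext (Prod.ext hxB (Prod.ext hyB hpB)) (Prod.ext hxC (Prod.ext hyC hpC))


end S1
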